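/- Let k be a nonarchimedean local field with ring of integers O, and let q ∈ M₂(k) be a trace-zero matrix (pure quaternion) with q² = a·I where a = b² for some b ∈ O, b ≠ 0. Then the maximal integer p such that there exists c ∈ O with (q − c·I)/π^p integral over O (i.e., the depth of O[q]) equals v(2b), where v is the normalized valuation. -/

import Mathlib

lemma key_dvd {O : Type*} [CommRing O] [IsDomain O] [IsDiscreteValuationRing O]
    {π : O} (hπ : Irreducible π) {p : ℕ} {b c : O}
    (h1 : π ^ p ∣ 2 * c) (h2 : π ^ (2 * p) ∣ c ^ 2 - b ^ 2) : π ^ p ∣ 2 * b := by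
  set u := c - b with hu
  set w := c + b with hw
  have huw : π ^ (2 * p) ∣ u * w := by
    have : u * w = c ^ 2 - b ^ 2 := by ring
    rwa [this]
  have hsum : π ^ p ∣ u + w := by
    have : u + w = 2 * c := by ring
    rwa [this]
  have hdu : π ^ p ∣ u := by
    by_contra hnd
    have hune : u ≠ 0 := by intro h0; rw [h0] at hnd; exact hnd (dvd_zero _)
    obtain ⟨k, ε, hke⟩ := IsDiscreteValuationRing.eq_unit_mul_pow_irreducible hune hπ
    have hkp : k < p := by
      by_contra hkp
      push_neg at hkp
      exact hnd (hke ▸ Dvd.dvd.mul_left (pow_dvd_pow π hkp) _)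
    have hdw : π ^ p ∣ w := by
      have h2p : π ^ k * π ^ (2 * p - k) ∣ π ^ k * w := by
        rw [← pow_add]
        have : k + (2 * p - k) = 2 * p := by omega
        rw [this]
        have : π ^ k * w = ε⁻¹ * (u * w) := by
          rw [hke, ← mul_assoc, ← mul_assoc, Units.inv_mul, one_mul]
        rw [this]
        exact Dvd.dvd.mul_left huw _
      have := (mul_dvd_mul_iff_left (pow_ne_zero k hπ.ne_zero)).mp h2p
      exact dvd_trans (pow_dvd_pow π (by omega)) this
    have : u = (u + w) - w := by ring
    rw [this] at hnd
    exact hnd (dvd_sub hsum hdw)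
  have hdw : π ^ p ∣ w := by
    have : w = (u + w) - u := by ring
    rw [this]; exact dvd_sub hsum hdu
  have : 2 * b = w - u := by rw [hu, hw]; ring
  rw [this]; exact dvd_sub hdw hdu

/-- For a pure quaternion `q ∈ M₂(k)` with `q² = b²·I`, `b ∈ O` nonzero, the depth of
`O[q]` — the greatest `p` with `(q − c·I)/π^p` integral for some `c ∈ O` — equals `v(2b)`. -/
theorem stmt_9 (O : Type*) [CommRing O] [IsDomain O] [IsDiscreteValuationRing O]
    [IsAdicComplete (IsLocalRing.maximalIdeal O) O] [Finite (IsLocalRing.ResidueField O)]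
    (K : Type*) [Field K] [Algebra O K] [IsFractionRing O K]
    (π : O) (hπ : Irreducible π)
    (q : Matrix (Fin 2) (Fin 2) K) (htr : Matrix.trace q = 0)
    (a b : O) (hb : b ≠ 0) (hab : a = b ^ 2)
    (hq2 : q * q = algebraMap O K a • (1 : Matrix (Fin 2) (Fin 2) K))
    (n : ℕ) (hn : ∃ ν : O, IsUnit ν ∧ 2 * b = ν * π ^ n) :
    IsGreatest {p : ℕ | ∃ c : O,
      Matrix.trace (((algebraMap O K π) ^ p)⁻¹ •
          (q - algebraMap O K c • (1 : Matrix (Fin 2) (Fin 2) K))) ∈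
        Set.range (algebraMap O K) ∧
      Matrix.det (((algebraMap O K π) ^ p)⁻¹ •
          (q - algebraMap O K c • (1 : Matrix (Fin 2) (Fin 2) K))) ∈
        Set.range (algebraMap O K)} n := by
  set φ := algebraMap O K with hφ
  have hinj : Function.Injective φ := IsFractionRing.injective O K
  have hπ0 : φ π ≠ 0 := fun h => hπ.ne_zero (hinj (by simpa using h))
  -- range membership characterization
  have range_iff : ∀ (m : ℕ) (y : O), ((φ π ^ m)⁻¹ * φ y ∈ Set.range φ ↔ π ^ m ∣ y) := by
    intro m y
    constructor
    · rintro ⟨d, hd⟩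
      refine ⟨d, hinj ?_⟩
      have hpm : φ π ^ m ≠ 0 := pow_ne_zero _ hπ0
      rw [map_mul, map_pow]
      field_simp at hd
      rw [← hd]; ring
    · rintro ⟨d, rfl⟩
      refine ⟨d, ?_⟩
      rw [map_mul, map_pow]
      field_simp
  -- trace computation
  have trace_eq : ∀ (m : ℕ) (c : O),
      Matrix.trace ((φ π ^ m)⁻¹ • (q - φ c • (1 : Matrix (Fin 2) (Fin 2) K)))
        = (φ π ^ m)⁻¹ * φ (-(2 * c)) := by
    intro m c
    rw [Matrix.trace_smul, Matrix.trace_sub, Matrix.trace_smul, Matrix.trace_one, htr]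
    simp only [Fintype.card_fin, Nat.cast_ofNat, smul_eq_mul, map_neg, map_mul, map_ofNat]
    ring
  -- entry facts
  have h00 : q 0 0 + q 1 1 = 0 := by
    simpa [Matrix.trace_fin_two] using htr
  have hsq : q 0 0 * q 0 0 + q 0 1 * q 1 0 = φ a := by
    have := congrFun (congrFun hq2 0) 0
    simpa [Matrix.mul_apply, Fin.sum_univ_two, Matrix.smul_apply, Matrix.one_apply] using this
  have det_eq : ∀ c : O, Matrix.det (q - φ c • (1 : Matrix (Fin 2) (Fin 2) K))
      = φ (c ^ 2 - a) := by
    intro c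
    rw [Matrix.det_fin_two]
    simp only [Matrix.sub_apply, Matrix.smul_apply, Matrix.one_apply_eq,
      Matrix.one_apply_ne (by decide : (0 : Fin 2) ≠ 1),
      Matrix.one_apply_ne (by decide : (1 : Fin 2) ≠ 0), map_sub, map_pow, smul_eq_mul]
    have h11 : q 1 1 = -(q 0 0) := by linear_combination h00
    rw [h11]
    linear_combination -hsq
  have det_smul_eq : ∀ (m : ℕ) (c : O),
      Matrix.det ((φ π ^ m)⁻¹ • (q - φ c • (1 : Matrix (Fin 2) (Fin 2) K)))
        = (φ π ^ (2 * m))⁻¹ * φ (c ^ 2 - a) := by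
    intro m c
    rw [Matrix.det_smul, det_eq, Fintype.card_fin]
    simp only [← inv_pow, ← pow_mul]
    rw [mul_comm m 2]
  -- membership iff
  have mem_iff : ∀ m : ℕ, (m ∈ {p : ℕ | ∃ c : O,
      Matrix.trace (((algebraMap O K π) ^ p)⁻¹ •
          (q - algebraMap O K c • (1 : Matrix (Fin 2) (Fin 2) K))) ∈
        Set.range (algebraMap O K) ∧
      Matrix.det (((algebraMap O K π) ^ p)⁻¹ •
          (q - algebraMap O K c • (1 : Matrix (Fin 2) (Fin 2) K))) ∈
        Set.range (algebraMap O K)}) ↔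
      ∃ c : O, π ^ m ∣ 2 * c ∧ π ^ (2 * m) ∣ c ^ 2 - a := by
    intro m
    simp only [Set.mem_setOf_eq, ← hφ]
    constructor
    · rintro ⟨c, h1, h2⟩
      rw [trace_eq] at h1
      rw [det_smul_eq] at h2
      exact ⟨c, dvd_neg.mp ((range_iff _ _).mp h1), (range_iff _ _).mp h2⟩
    · rintro ⟨c, h1, h2⟩
      exact ⟨c, by rw [trace_eq]; exact (range_iff _ _).mpr (dvd_neg.mpr h1),
        by rw [det_smul_eq]; exact (range_iff _ _).mpr h2⟩
  obtain ⟨ν, hν, h2b⟩ := hn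
  constructor
  · rw [mem_iff]
    exact ⟨b, ⟨ν, by rw [h2b]; ring⟩, by rw [hab]; simp⟩
  · intro m hm
    rw [mem_iff] at hm
    obtain ⟨c, h1, h2⟩ := hm
    rw [hab] at h2
    have hd2b : π ^ m ∣ 2 * b := key_dvd hπ h1 h2
    rw [h2b] at hd2b
    exact (pow_dvd_pow_iff hπ.ne_zero hπ.not_isUnit).mp ((IsUnit.dvd_mul_left hν).mp hd2b)
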